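/- Let g_m(z) = b_m(z) − a_m(z), where a_m(z) = a(z) for |z| ≥ 1/m, a_m(z) = m z a(1/m) for |z| ≤ 1/m, b_m(z) = b(z) for |z| ≤ m, and b_m(z) = (z/m) b(m) for |z| ≥ m. Then for every z ∈ ℂ, g_m(z) → z Log|z|² as m → ∞ (with the convention 0·Log 0 = 0), and each g_m is globally Lipschitz on ℂ. -/

import Mathlib

open Filter Set
open scoped NNReal

/-- The function `A` from (2.2). -/
noncomputable def Afun (t : ℝ) : ℝ :=
  if t ≤ Real.exp (-3) then -(t ^ 2) * Real.log (t ^ 2)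
  else 3 * t ^ 2 + 4 * Real.exp (-3) * t - Real.exp (-6)

/-- `B(s) = s² Log(s²) + A(s)`. -/
noncomputable def Bfun (t : ℝ) : ℝ := t ^ 2 * Real.log (t ^ 2) + Afun t

/-- `a(z) = (z/|z|²) A(|z|)`, `a(0) = 0`. -/
noncomputable def afun (z : ℂ) : ℂ :=
  if z = 0 then 0 else z / ((‖z‖ : ℂ) ^ 2) * (Afun ‖z‖ : ℝ)

/-- `b(z) = (z/|z|²) B(|z|)`, `b(0) = 0`. -/
noncomputable def bfun (z : ℂ) : ℂ :=
  if z = 0 then 0 else z / ((‖z‖ : ℂ) ^ 2) * (Bfun ‖z‖ : ℝ)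

/-- `a_m(z) = a(z)` for `|z| ≥ 1/m` and `a_m(z) = m z a(1/m)` for `|z| ≤ 1/m`. -/
noncomputable def am (m : ℕ) (z : ℂ) : ℂ :=
  if (1 : ℝ) / m ≤ ‖z‖ then afun z else (m : ℂ) * z * afun ((1 : ℂ) / m)

/-- `b_m(z) = b(z)` for `|z| ≤ m` and `b_m(z) = (z/m) b(m)` for `|z| ≥ m`. -/
noncomputable def bm (m : ℕ) (z : ℂ) : ℂ :=
  if ‖z‖ ≤ (m : ℝ) then bfun z else z / (m : ℂ) * bfun (m : ℂ)

/-- The regularized nonlinearity `g_m = b_m − a_m`. -/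
noncomputable def gm (m : ℕ) (z : ℂ) : ℂ := bm m z - am m z

lemma exp6eq : Real.exp (-6) = Real.exp (-3) ^ 2 := by
  rw [sq, ← Real.exp_add]; norm_num

lemma Afun_of_le {t : ℝ} (h : t ≤ Real.exp (-3)) :
    Afun t = -(t ^ 2) * Real.log (t ^ 2) := if_pos h

lemma Afun_of_ge {t : ℝ} (h : Real.exp (-3) ≤ t) :
    Afun t = 3 * t ^ 2 + 4 * Real.exp (-3) * t - Real.exp (-6) := by
  rcases eq_or_lt_of_le h with h' | h'
  · subst h'
    rw [Afun_of_le le_rfl]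
    norm_num
    rw [exp6eq]
    ring
  · exact if_neg (not_le.mpr h')

lemma Bfun_of_le {t : ℝ} (h : t ≤ Real.exp (-3)) : Bfun t = 0 := by
  rw [Bfun, Afun_of_le h]; ring

lemma lips_weaken {α β : Type*} [PseudoEMetricSpace α] [PseudoEMetricSpace β]
    {f : α → β} {s : Set α} {K K' : ℝ≥0} (hf : LipschitzOnWith K f s) (h : K ≤ K') :
    LipschitzOnWith K' f s := fun x hx y hy =>
  le_trans (hf hx hy) (mul_le_mul_left (by exact_mod_cast h) _)

lemma lips_congr {f g : ℝ → ℝ} {s : Set ℝ} {K : ℝ≥0} (h : EqOn f g s)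
    (hg : LipschitzOnWith K g s) : LipschitzOnWith K f s := fun x hx y hy => by
  rw [h hx, h hy]; exact hg hx hy

lemma lips_glue {f : ℝ → ℝ} {K : ℝ≥0} {a b : ℝ} (hab : a ≤ b)
    (h1 : LipschitzOnWith K f (Icc a b)) (h2 : LipschitzOnWith K f (Ici b)) :
    LipschitzOnWith K f (Ici a) := by
  rw [lipschitzOnWith_iff_dist_le_mul] at *
  have key : ∀ x ∈ Ici a, ∀ y ∈ Ici a, x ≤ y → dist (f x) (f y) ≤ K * dist x y := by
    intro x hx y hy hxy
    rcases le_total y b with hyb | hby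
    · exact h1 x ⟨hx, hxy.trans hyb⟩ y ⟨hy, hyb⟩
    · rcases le_total b x with hbx | hxb
      · exact h2 x hbx y (hbx.trans hxy)
      · calc dist (f x) (f y) ≤ dist (f x) (f b) + dist (f b) (f y) := dist_triangle _ _ _
          _ ≤ K * dist x b + K * dist b y :=
              add_le_add (h1 x ⟨hx, hxb⟩ b ⟨hab, le_rfl⟩) (h2 b self_mem_Ici y hby)
          _ = K * dist x y := by
              rw [Real.dist_eq, Real.dist_eq, Real.dist_eq,
                abs_of_nonpos (by linarith), abs_of_nonpos (by linarith),
                abs_of_nonpos (by linarith)]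
              ring
  intro x hx y hy
  rcases le_total x y with h | h
  · exact key x hx y hy h
  · rw [dist_comm, dist_comm x y]; exact key y hy x hx h

lemma lips_sub {f g : ℝ → ℝ} {s : Set ℝ} {Kf Kg : ℝ≥0}
    (hf : LipschitzOnWith Kf f s) (hg : LipschitzOnWith Kg g s) :
    LipschitzOnWith (Kf + Kg) (fun r => f r - g r) s := by
  rw [lipschitzOnWith_iff_dist_le_mul] at *
  intro x hx y hy
  calc dist (f x - g x) (f y - g y) ≤ dist (f x) (f y) + dist (g x) (g y) :=
        dist_sub_sub_le _ _ _ _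
    _ ≤ Kf * dist x y + Kg * dist x y := add_le_add (hf x hx y hy) (hg x hx y hy)
    _ = (Kf + Kg : ℝ≥0) * dist x y := by push_cast; ring

lemma radial_lipschitz {f : ℂ → ℂ} {ψ : ℝ → ℝ} {K : ℝ≥0} (hf0 : f 0 = 0)
    (hψ0 : ψ 0 = 0) (hψ : LipschitzOnWith K ψ (Ici 0))
    (hf : ∀ z : ℂ, z ≠ 0 → f z = z / (‖z‖ : ℂ) * ((ψ ‖z‖ : ℝ) : ℂ)) :
    LipschitzWith (3 * K) f := by
  rw [lipschitzOnWith_iff_dist_le_mul] at hψ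
  have hψabs : ∀ a b : ℝ, 0 ≤ a → 0 ≤ b → |ψ a - ψ b| ≤ (K : ℝ) * |a - b| := by
    intro a b ha hb
    have := hψ a ha b hb
    rwa [Real.dist_eq, Real.dist_eq] at this
  have hψle : ∀ a : ℝ, 0 ≤ a → |ψ a| ≤ (K : ℝ) * a := by
    intro a ha
    have := hψabs a 0 ha le_rfl
    simpa [hψ0, abs_of_nonneg ha] using this
  have hunit : ∀ z : ℂ, z ≠ 0 → ‖z / (‖z‖ : ℂ)‖ = 1 := by
    intro z hz
    have h0 : ‖z‖ ≠ 0 := norm_ne_zero_iff.mpr hz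
    rw [norm_div, Complex.norm_real, Real.norm_eq_abs, abs_of_nonneg (norm_nonneg _),
      div_self h0]
  have hfn : ∀ z : ℂ, z ≠ 0 → ‖f z‖ ≤ (K : ℝ) * ‖z‖ := by
    intro z hz
    rw [hf z hz, norm_mul, hunit z hz, one_mul, Complex.norm_real, Real.norm_eq_abs]
    exact hψle _ (norm_nonneg z)
  have key : ∀ x y : ℂ, x ≠ 0 → y ≠ 0 → ‖y‖ ≤ ‖x‖ →
      ‖f x - f y‖ ≤ 3 * (K : ℝ) * ‖x - y‖ := by
    intro x y hx hy hyx
    have hxp : (0:ℝ) < ‖x‖ := norm_pos_iff.mpr hx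
    have hyp : (0:ℝ) < ‖y‖ := norm_pos_iff.mpr hy
    have hxc : ((‖x‖ : ℝ) : ℂ) ≠ 0 := Complex.ofReal_ne_zero.mpr hxp.ne'
    have hyc : ((‖y‖ : ℝ) : ℂ) ≠ 0 := Complex.ofReal_ne_zero.mpr hyp.ne'
    have hsplit : f x - f y =
        x / (‖x‖ : ℂ) * (((ψ ‖x‖ - ψ ‖y‖ : ℝ) : ℂ)) +
          ((ψ ‖y‖ : ℝ) : ℂ) * (x / (‖x‖ : ℂ) - y / (‖y‖ : ℂ)) := by
      rw [hf x hx, hf y hy]; push_cast; ring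
    have hdirbound : ‖x / (‖x‖ : ℂ) - y / (‖y‖ : ℂ)‖ ≤ 2 * ‖x - y‖ / ‖x‖ := by
      have halg : ∀ a b : ℂ, a ≠ 0 → b ≠ 0 →
          x / a - y / b = (x - y) / a + y * (b - a) / (a * b) := by
        intro a b ha hb; field_simp; ring
      have hdec : x / (‖x‖ : ℂ) - y / (‖y‖ : ℂ) =
          (x - y) / (‖x‖ : ℂ) + y * (((‖y‖ - ‖x‖ : ℝ) : ℂ)) / ((‖x‖ : ℂ) * (‖y‖ : ℂ)) := by
        push_cast
        exact halg _ _ hxc hyc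
      rw [hdec]
      have h1 : ‖(x - y) / (‖x‖ : ℂ)‖ = ‖x - y‖ / ‖x‖ := by
        rw [norm_div, Complex.norm_real, Real.norm_eq_abs, abs_of_nonneg (norm_nonneg _)]
      have h2 : ‖y * (((‖y‖ - ‖x‖ : ℝ) : ℂ)) / ((‖x‖ : ℂ) * (‖y‖ : ℂ))‖ ≤ ‖x - y‖ / ‖x‖ := by
        rw [norm_div, norm_mul, norm_mul, Complex.norm_real, Complex.norm_real,
          Complex.norm_real, Real.norm_eq_abs, Real.norm_eq_abs, Real.norm_eq_abs,
          abs_of_nonneg (norm_nonneg x), abs_of_nonneg (norm_nonneg y)]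
        have habs : |‖y‖ - ‖x‖| ≤ ‖x - y‖ := by
          rw [abs_sub_comm]; exact abs_norm_sub_norm_le x y
        rw [div_le_div_iff₀ (by positivity) hxp]
        calc ‖y‖ * |‖y‖ - ‖x‖| * ‖x‖ ≤ ‖y‖ * ‖x - y‖ * ‖x‖ := by
              gcongr
          _ = ‖x - y‖ * (‖x‖ * ‖y‖) := by ring
      calc ‖_ + _‖ ≤ ‖(x - y) / (‖x‖ : ℂ)‖ + ‖y * (((‖y‖ - ‖x‖ : ℝ) : ℂ)) / ((‖x‖ : ℂ) * (‖y‖ : ℂ))‖ :=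
            norm_add_le _ _
        _ ≤ ‖x - y‖ / ‖x‖ + ‖x - y‖ / ‖x‖ := by rw [h1]; exact add_le_add le_rfl h2
        _ = 2 * ‖x - y‖ / ‖x‖ := by ring
    calc ‖f x - f y‖ ≤ ‖x / (‖x‖ : ℂ) * (((ψ ‖x‖ - ψ ‖y‖ : ℝ) : ℂ))‖ +
          ‖((ψ ‖y‖ : ℝ) : ℂ) * (x / (‖x‖ : ℂ) - y / (‖y‖ : ℂ))‖ := by
            rw [hsplit]; exact norm_add_le _ _
      _ ≤ (K : ℝ) * ‖x - y‖ + ((K : ℝ) * ‖y‖) * (2 * ‖x - y‖ / ‖x‖) := by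
          apply add_le_add
          · rw [norm_mul, hunit x hx, one_mul, Complex.norm_real, Real.norm_eq_abs]
            calc |ψ ‖x‖ - ψ ‖y‖| ≤ (K : ℝ) * |‖x‖ - ‖y‖| :=
                  hψabs _ _ (norm_nonneg _) (norm_nonneg _)
              _ ≤ (K : ℝ) * ‖x - y‖ := by
                  gcongr
                  exact abs_norm_sub_norm_le x y
          · rw [norm_mul, Complex.norm_real, Real.norm_eq_abs]
            exact mul_le_mul (hψle _ (norm_nonneg _)) hdirbound (norm_nonneg _)
              (by positivity)
      _ ≤ (K : ℝ) * ‖x - y‖ + ((K : ℝ) * ‖x‖) * (2 * ‖x - y‖ / ‖x‖) := by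
          gcongr
      _ = (K : ℝ) * ‖x - y‖ + (K : ℝ) * (2 * ‖x - y‖) * (‖x‖ * ‖x‖⁻¹) := by
          rw [div_eq_mul_inv]; ring
      _ = 3 * (K : ℝ) * ‖x - y‖ := by
          rw [mul_inv_cancel₀ hxp.ne']; ring
  apply LipschitzWith.of_dist_le_mul
  have hC : ((3 * K : ℝ≥0) : ℝ) = 3 * (K : ℝ) := by push_cast; ring
  have hK3 : (K : ℝ) ≤ 3 * (K : ℝ) := by nlinarith [K.coe_nonneg]
  intro x y
  rw [dist_eq_norm, dist_eq_norm, hC]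
  by_cases hx : x = 0
  · subst hx
    by_cases hy : y = 0
    · simp [hy, hf0]
    · rw [hf0, zero_sub, norm_neg, zero_sub, norm_neg]
      exact (hfn y hy).trans (by nlinarith [norm_nonneg y, K.coe_nonneg])
  · by_cases hy : y = 0
    · subst hy
      rw [hf0, sub_zero, sub_zero]
      exact (hfn x hx).trans (by nlinarith [norm_nonneg x, K.coe_nonneg])
    · rcases le_total ‖y‖ ‖x‖ with h | h
      · exact key x y hx hy h
      · rw [norm_sub_rev, norm_sub_rev x y]
        exact key y x hy hx h

noncomputable def psib (m : ℕ) (r : ℝ) : ℝ :=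
  if r ≤ (m : ℝ) then Bfun r / r else Bfun m / (m : ℝ) ^ 2 * r

noncomputable def psia (m : ℕ) (r : ℝ) : ℝ :=
  if (1 : ℝ) / m ≤ r then Afun r / r else (m : ℝ) ^ 2 * Afun (1 / m) * r

noncomputable def Kc (m : ℕ) : ℝ≥0 := 4 * m + 20

lemma Kc_coe (m : ℕ) : ((Kc m : ℝ≥0) : ℝ) = 4 * (m : ℝ) + 20 := by
  rw [Kc]; push_cast; ring

lemma nnnorm_le_Kc {x : ℝ} {m : ℕ} (h : |x| ≤ 4 * (m : ℝ) + 20) : ‖x‖₊ ≤ Kc m := by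
  rw [← NNReal.coe_le_coe, coe_nnnorm, Real.norm_eq_abs, Kc_coe]
  exact h

lemma hd_rlog {r : ℝ} (hr : r ≠ 0) :
    HasDerivAt (fun s : ℝ => s * Real.log (s ^ 2)) (Real.log (r ^ 2) + 2) r := by
  have h1 : HasDerivAt (fun s : ℝ => s ^ 2) (2 * r) r := by
    simpa using hasDerivAt_pow 2 r
  have h2 : HasDerivAt (fun s : ℝ => Real.log (s ^ 2)) (2 * r / r ^ 2) r :=
    h1.log (pow_ne_zero 2 hr)
  have h3 := (hasDerivAt_id r).mul h2
  convert h3 using 1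
  · rfl
  · rfl
  show Real.log (r ^ 2) + 2 = 1 * Real.log (r ^ 2) + r * (2 * r / r ^ 2)
  field_simp
  ring
  rfl

lemma hd_lin (c d r : ℝ) : HasDerivAt (fun s : ℝ => c * s + d) c r := by
  simpa using ((hasDerivAt_id r).const_mul c).add_const d

lemma hd_invc {r : ℝ} (hr : r ≠ 0) (c : ℝ) :
    HasDerivAt (fun s : ℝ => c / s) (-(c / r ^ 2)) r := by
  have h := (hasDerivAt_inv hr).const_mul c
  have he : (fun s : ℝ => c / s) = fun s : ℝ => c * s⁻¹ := by
    funext s; rw [div_eq_mul_inv]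
  rw [he, show -(c / r ^ 2) = c * -(r ^ 2)⁻¹ by rw [div_eq_mul_inv]; ring]
  exact h

lemma exp3_pos : (0 : ℝ) < Real.exp (-3) := Real.exp_pos _
lemma exp3_le_one : Real.exp (-3) ≤ 1 := by
  rw [show (1:ℝ) = Real.exp 0 by rw [Real.exp_zero]]
  exact Real.exp_le_exp.mpr (by norm_num)
lemma exp6_pos : (0 : ℝ) < Real.exp (-6) := Real.exp_pos _
lemma exp6_le_one : Real.exp (-6) ≤ 1 := by
  rw [show (1:ℝ) = Real.exp 0 by rw [Real.exp_zero]]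
  exact Real.exp_le_exp.mpr (by norm_num)

lemma psib_lips (m : ℕ) (hm : 1 ≤ m) : LipschitzOnWith (Kc m) (psib m) (Ici 0) := by
  have hm1 : (1 : ℝ) ≤ m := by exact_mod_cast hm
  have hmp : (0 : ℝ) < m := by linarith
  have he3m : Real.exp (-3) ≤ (m : ℝ) := exp3_le_one.trans hm1
  have hlogm0 : 0 ≤ Real.log m := Real.log_nonneg hm1
  have hlogm1 : Real.log m ≤ (m : ℝ) - 1 := Real.log_le_sub_one_of_pos hmp
  -- piece 1 : constant 0 on [0, e^{-3}]
  have hB1 : LipschitzOnWith (Kc m) (psib m) (Icc 0 (Real.exp (-3))) := by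
    apply lips_congr (g := fun _ => (0 : ℝ))
    · intro r hr
      rw [psib, if_pos (hr.2.trans he3m), Bfun_of_le hr.2, zero_div]
    · exact ((LipschitzWith.const (0 : ℝ)).weaken zero_le).lipschitzOnWith
  -- piece 2 : on [e^{-3}, m]
  have hB2 : LipschitzOnWith (Kc m) (psib m) (Icc (Real.exp (-3)) (m : ℝ)) := by
    apply lips_congr
      (g := fun r => r * Real.log (r ^ 2) + (3 * r + 4 * Real.exp (-3)) - Real.exp (-6) / r)
    · intro r hr
      have hr0 : (0 : ℝ) < r := lt_of_lt_of_le exp3_pos hr.1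
      rw [psib, if_pos hr.2, Bfun, Afun_of_ge hr.1]
      field_simp
      ring
    · apply (convex_Icc _ _).lipschitzOnWith_of_nnnorm_hasDerivWithin_le
        (f' := fun r => Real.log (r ^ 2) + 5 + Real.exp (-6) / r ^ 2)
      · intro r hr
        have hr0 : (0 : ℝ) < r := lt_of_lt_of_le exp3_pos hr.1
        have h := ((hd_rlog hr0.ne').add (hd_lin 3 (4 * Real.exp (-3)) r)).sub
          (hd_invc hr0.ne' (Real.exp (-6)))
        refine HasDerivAt.hasDerivWithinAt ?_
        convert h using 1
        · rfl
        ring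
      · intro r hr
        have hr0 : (0 : ℝ) < r := lt_of_lt_of_le exp3_pos hr.1
        apply nnnorm_le_Kc
        have hlogr : Real.log (r ^ 2) = 2 * Real.log r := by
          rw [Real.log_pow]; push_cast; ring
        have h1 : Real.log r ≤ Real.log m := Real.log_le_log hr0 hr.2
        have h2 : (-3 : ℝ) ≤ Real.log r := by
          have := Real.log_le_log exp3_pos hr.1
          rwa [Real.log_exp] at this
        have h3 : Real.exp (-6) / r ^ 2 ≤ 1 := by
          rw [div_le_one (by positivity), exp6eq]
          nlinarith [hr.1, exp3_pos]
        have h4 : (0 : ℝ) ≤ Real.exp (-6) / r ^ 2 := by positivity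
        rw [abs_le]
        constructor <;> nlinarith
  -- piece 3 : linear on [m, ∞)
  have hB3 : LipschitzOnWith (Kc m) (psib m) (Ici (m : ℝ)) := by
    apply lips_congr (g := fun r => Bfun m / (m : ℝ) ^ 2 * r)
    · intro r hr
      rw [psib]
      by_cases hrm : r ≤ (m : ℝ)
      · have : r = (m : ℝ) := le_antisymm hrm hr
        subst this
        rw [if_pos le_rfl]
        field_simp
      · rw [if_neg hrm]
    · apply (convex_Ici _).lipschitzOnWith_of_nnnorm_hasDerivWithin_le
        (f' := fun _ => Bfun m / (m : ℝ) ^ 2)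
      · intro r _
        have h := hd_lin (Bfun m / (m : ℝ) ^ 2) 0 r
        simp only [add_zero] at h
        exact h.hasDerivWithinAt
      · intro r _
        apply nnnorm_le_Kc
        have hc : Bfun m / (m : ℝ) ^ 2 =
            Real.log ((m : ℝ) ^ 2) + 3 + 4 * Real.exp (-3) / m - Real.exp (-6) / (m : ℝ) ^ 2 := by
          rw [Bfun, Afun_of_ge he3m]
          field_simp
          ring
        rw [hc]
        have hlogr : Real.log ((m : ℝ) ^ 2) = 2 * Real.log m := by
          rw [Real.log_pow]; push_cast; ring
        have h3 : 4 * Real.exp (-3) / m ≤ 4 := by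
          rw [div_le_iff₀ hmp]
          nlinarith [exp3_le_one, exp3_pos]
        have h4 : (0 : ℝ) ≤ 4 * Real.exp (-3) / m := by positivity
        have h5 : Real.exp (-6) / (m : ℝ) ^ 2 ≤ 1 := by
          rw [div_le_one (by positivity)]
          nlinarith [exp6_le_one]
        have h6 : (0 : ℝ) ≤ Real.exp (-6) / (m : ℝ) ^ 2 := by positivity
        rw [abs_le]
        constructor <;> nlinarith
  exact lips_glue (le_of_lt exp3_pos) hB1 (lips_glue he3m hB2 hB3)

lemma psia_lips (m : ℕ) (hm : 1 ≤ m) : LipschitzOnWith (Kc m) (psia m) (Ici 0) := by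
  have hm1 : (1 : ℝ) ≤ m := by exact_mod_cast hm
  have hmp : (0 : ℝ) < m := by linarith
  have hinvp : (0 : ℝ) < 1 / m := by positivity
  have hlogm0 : 0 ≤ Real.log m := Real.log_nonneg hm1
  have hlogm1 : Real.log m ≤ (m : ℝ) - 1 := Real.log_le_sub_one_of_pos hmp
  set c : ℝ := max ((1 : ℝ) / m) (Real.exp (-3)) with hc
  -- piece 1 : linear on [0, 1/m]
  have hA1 : LipschitzOnWith (Kc m) (psia m) (Icc 0 ((1 : ℝ) / m)) := by
    apply lips_congr (g := fun r => (m : ℝ) ^ 2 * Afun (1 / m) * r)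
    · intro r hr
      rw [psia]
      by_cases hrm : (1 : ℝ) / m ≤ r
      · have : r = (1 : ℝ) / m := le_antisymm hr.2 hrm
        subst this
        rw [if_pos le_rfl]
        field_simp
      · rw [if_neg hrm]
    · apply (convex_Icc _ _).lipschitzOnWith_of_nnnorm_hasDerivWithin_le
        (f' := fun _ => (m : ℝ) ^ 2 * Afun (1 / m))
      · intro r _
        have h := hd_lin ((m : ℝ) ^ 2 * Afun (1 / m)) 0 r
        simp only [add_zero] at h
        exact h.hasDerivWithinAt
      · intro r _
        apply nnnorm_le_Kc
        by_cases hsm : (1 : ℝ) / m ≤ Real.exp (-3)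
        · have hval : (m : ℝ) ^ 2 * Afun (1 / m) = 2 * Real.log m := by
            rw [Afun_of_le hsm]
            have hlog : Real.log (((1 : ℝ) / m) ^ 2) = -(2 * Real.log m) := by
              rw [Real.log_pow, one_div, Real.log_inv]
              push_cast
              ring
            rw [hlog]
            field_simp
          rw [hval, abs_le]
          constructor <;> nlinarith
        · have hlt : Real.exp (-3) < 1 / m := not_le.mp hsm
          have hem : Real.exp (-3) * m < 1 := by
            rwa [lt_div_iff₀ hmp] at hlt
          have hval : (m : ℝ) ^ 2 * Afun (1 / m) =
              3 + 4 * Real.exp (-3) * m - Real.exp (-6) * m ^ 2 := by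
            rw [Afun_of_ge hlt.le]
            field_simp
          rw [hval, abs_le, exp6eq]
          constructor <;> nlinarith [exp3_pos, mul_pos exp3_pos hmp]
  -- piece 2 : on [1/m, c]
  have hA2 : LipschitzOnWith (Kc m) (psia m) (Icc ((1 : ℝ) / m) c) := by
    by_cases hsm : (1 : ℝ) / m ≤ Real.exp (-3)
    · have hce : c = Real.exp (-3) := max_eq_right hsm
      rw [hce]
      apply lips_congr (g := fun r => -(r * Real.log (r ^ 2)))
      · intro r hr
        have hr0 : (0 : ℝ) < r := lt_of_lt_of_le hinvp hr.1
        rw [psia, if_pos hr.1, Afun_of_le hr.2]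
        field_simp
      · apply (convex_Icc _ _).lipschitzOnWith_of_nnnorm_hasDerivWithin_le
          (f' := fun r => -(Real.log (r ^ 2) + 2))
        · intro r hr
          have hr0 : (0 : ℝ) < r := lt_of_lt_of_le hinvp hr.1
          exact (hd_rlog hr0.ne').neg.hasDerivWithinAt
        · intro r hr
          have hr0 : (0 : ℝ) < r := lt_of_lt_of_le hinvp hr.1
          apply nnnorm_le_Kc
          have hlogr : Real.log (r ^ 2) = 2 * Real.log r := by
            rw [Real.log_pow]; push_cast; ring
          have h1 : Real.log (1 / m) ≤ Real.log r := Real.log_le_log hinvp hr.1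
          have h1' : Real.log ((1 : ℝ) / m) = -Real.log m := by
            rw [one_div, Real.log_inv]
          have h2 : Real.log r ≤ -3 := by
            have := Real.log_le_log hr0 hr.2
            rwa [Real.log_exp] at this
          rw [abs_le]
          constructor <;> nlinarith
    · have hce : c = (1 : ℝ) / m := max_eq_left (not_le.mp hsm).le
      rw [hce, Icc_self]
      intro x hx y hy
      rw [mem_singleton_iff.mp hx, mem_singleton_iff.mp hy]
      simp
  -- piece 3 : on [c, ∞)
  have hA3 : LipschitzOnWith (Kc m) (psia m) (Ici c) := by
    apply lips_congr (g := fun r => 3 * r + 4 * Real.exp (-3) - Real.exp (-6) / r)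
    · intro r hr
      have hre : Real.exp (-3) ≤ r := le_trans (le_max_right _ _) hr
      have hrm : (1 : ℝ) / m ≤ r := le_trans (le_max_left _ _) hr
      have hr0 : (0 : ℝ) < r := lt_of_lt_of_le exp3_pos hre
      rw [psia, if_pos hrm, Afun_of_ge hre]
      field_simp
    · apply (convex_Ici _).lipschitzOnWith_of_nnnorm_hasDerivWithin_le
        (f' := fun r => 3 + Real.exp (-6) / r ^ 2)
      · intro r hr
        have hre : Real.exp (-3) ≤ r := le_trans (le_max_right _ _) hr
        have hr0 : (0 : ℝ) < r := lt_of_lt_of_le exp3_pos hre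
        have h := (hd_lin 3 (4 * Real.exp (-3)) r).sub (hd_invc hr0.ne' (Real.exp (-6)))
        refine HasDerivAt.hasDerivWithinAt ?_
        convert h using 1
        · rfl
        ring
      · intro r hr
        have hre : Real.exp (-3) ≤ r := le_trans (le_max_right _ _) hr
        have hr0 : (0 : ℝ) < r := lt_of_lt_of_le exp3_pos hre
        apply nnnorm_le_Kc
        have h3 : Real.exp (-6) / r ^ 2 ≤ 1 := by
          rw [div_le_one (by positivity), exp6eq]
          nlinarith [exp3_pos]
        have h4 : (0 : ℝ) ≤ Real.exp (-6) / r ^ 2 := by positivity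
        rw [abs_le]
        constructor <;> nlinarith [hmp]
  exact lips_glue hinvp.le hA1 (lips_glue (le_max_left _ _) hA2 hA3)



lemma bm_eq (m : ℕ) (hm : 1 ≤ m) {z : ℂ} (hz : z ≠ 0) :
    bm m z = z / (‖z‖ : ℂ) * ((psib m ‖z‖ : ℝ) : ℂ) := by
  have hzc : ((‖z‖ : ℝ) : ℂ) ≠ 0 := Complex.ofReal_ne_zero.mpr (norm_ne_zero_iff.mpr hz)
  have hmc : ((m : ℕ) : ℂ) ≠ 0 := Nat.cast_ne_zero.mpr (by omega)
  have hza : ((‖z‖ : ℝ) : ℂ) ≠ 0 := hzc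
  rw [bm, psib]
  by_cases h : ‖z‖ ≤ (m : ℝ)
  · rw [if_pos h, if_pos h, bfun, if_neg hz]
    push_cast
    field_simp
  · rw [if_neg h, if_neg h, bfun, if_neg hmc]
    have hnm : ‖((m : ℕ) : ℂ)‖ = (m : ℝ) := by simp
    rw [hnm]
    push_cast
    field_simp

lemma am_eq (m : ℕ) (hm : 1 ≤ m) {z : ℂ} (hz : z ≠ 0) :
    am m z = z / (‖z‖ : ℂ) * ((psia m ‖z‖ : ℝ) : ℂ) := by
  have hzc : ((‖z‖ : ℝ) : ℂ) ≠ 0 := Complex.ofReal_ne_zero.mpr (norm_ne_zero_iff.mpr hz)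
  have hmc : ((m : ℕ) : ℂ) ≠ 0 := Nat.cast_ne_zero.mpr (by omega)
  have h1m : ((1 : ℂ) / m) ≠ 0 := one_div_ne_zero hmc
  have hza : ((‖z‖ : ℝ) : ℂ) ≠ 0 := hzc
  rw [am, psia]
  by_cases h : (1 : ℝ) / m ≤ ‖z‖
  · rw [if_pos h, if_pos h, afun, if_neg hz]
    push_cast
    field_simp
  · rw [if_neg h, if_neg h, afun, if_neg h1m]
    have hn1m : ‖(1 : ℂ) / (m : ℂ)‖ = 1 / (m : ℝ) := by simp
    rw [hn1m]
    push_cast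
    field_simp

lemma gm_zero (m : ℕ) : gm m 0 = 0 := by
  simp [gm, bm, am, bfun, afun]

/-- For every `z ∈ ℂ`, `g_m(z) → z Log|z|²` as `m → ∞` (with `0 · Log 0 = 0`), and each
`g_m` (`m ≥ 1`) is globally Lipschitz on `ℂ`. -/
theorem gm_tendsto_and_lipschitz :
    (∀ z : ℂ, Tendsto (fun m : ℕ => gm m z) atTop
        (nhds (z * (Real.log (‖z‖ ^ 2) : ℂ)))) ∧
      ∀ m : ℕ, 1 ≤ m → ∃ K : NNReal, LipschitzWith K (gm m) := by
  constructor
  · intro z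
    by_cases hz : z = 0
    · subst hz
      have he : ∀ m : ℕ, gm m 0 = 0 := gm_zero
      simp only [he, zero_mul]
      exact tendsto_const_nhds
    · have hzp : (0 : ℝ) < ‖z‖ := norm_pos_iff.mpr hz
      have hzc : ((‖z‖ : ℝ) : ℂ) ≠ 0 := Complex.ofReal_ne_zero.mpr hzp.ne'
      have hza : ((‖z‖ : ℝ) : ℂ) ≠ 0 := hzc
      apply Tendsto.congr' _ tendsto_const_nhds
      rw [EventuallyEq, eventually_atTop]
      refine ⟨max ⌈(1 : ℝ) / ‖z‖⌉₊ ⌈‖z‖⌉₊ + 1, fun m hmN => ?_⟩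
      have hm1 : 1 ≤ m := le_trans (Nat.le_add_left 1 _) hmN
      have hmp : (0 : ℝ) < m := by exact_mod_cast Nat.lt_of_lt_of_le Nat.zero_lt_one hm1
      have hc1 : (1 : ℝ) / ‖z‖ ≤ m := by
        have h1 : (⌈(1 : ℝ) / ‖z‖⌉₊ : ℝ) ≤ m := by
          exact_mod_cast le_trans (le_max_left _ _) (le_trans (Nat.le_succ _) hmN)
        exact le_trans (Nat.le_ceil _) h1
      have hc2 : ‖z‖ ≤ (m : ℝ) := by
        have h1 : (⌈‖z‖⌉₊ : ℝ) ≤ m := by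
          exact_mod_cast le_trans (le_max_right _ _) (le_trans (Nat.le_succ _) hmN)
        exact le_trans (Nat.le_ceil _) h1
      have hc1' : (1 : ℝ) / m ≤ ‖z‖ := by
        rw [div_le_iff₀ hmp]
        rw [div_le_iff₀ hzp] at hc1
        linarith
      show (_ : ℂ) = _
      symm
      rw [gm, bm, am, if_pos hc2, if_pos hc1', bfun, afun, if_neg hz, if_neg hz, Bfun]
      push_cast
      field_simp
      ring
  · intro m hm
    refine ⟨3 * (Kc m + Kc m), ?_⟩
    have hinvp : (0 : ℝ) < 1 / m := by
      have : (0:ℝ) < m := by exact_mod_cast Nat.lt_of_lt_of_le Nat.zero_lt_one hm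
      positivity
    apply radial_lipschitz (ψ := fun r => psib m r - psia m r) (gm_zero m)
    · rw [psib, psia, if_pos (Nat.cast_nonneg m), if_neg (not_le.mpr hinvp)]
      simp
    · exact lips_sub (psib_lips m hm) (psia_lips m hm)
    · intro z hzne
      rw [gm, bm_eq m hm hzne, am_eq m hm hzne]
      push_cast
      ring
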